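/- Let 𝕃 be a quadratic space over ℚ_p and suppose Λ, Λ′ are vertex lattices in 𝕃 (lattices with pΛ ⊆ Λ^∨ ⊆ Λ). Then there exists a finite chain Λ = Λ₀, Λ₁, …, Λ_n = Λ′ of vertex lattices such that for each i, either Λ_i ⊆ Λ_{i+1} or Λ_i ⊇ Λ_{i+1}. -/

import Mathlib

set_option linter.unusedSectionVars false
set_option linter.unusedVariables false
set_option synthInstance.maxHeartbeats 400000
set_option maxHeartbeats 1000000



/-- A vertex lattice in a quadratic space `𝕃` over `ℚ_p` with bilinear form
`B`: a full `ℤ_p`-lattice `Λ` with `pΛ ⊆ Λ^∨ ⊆ Λ`, where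
`Λ^∨ = {x | ∀ y ∈ Λ, ‖B x y‖ ≤ 1}`. -/
def IsVertexLattice (p : ℕ) [Fact (Nat.Prime p)] {𝕃 : Type*} [AddCommGroup 𝕃]
    [Module ℚ_[p] 𝕃] [Module ℤ_[p] 𝕃] [IsScalarTower ℤ_[p] ℚ_[p] 𝕃]
    (B : 𝕃 → 𝕃 → ℚ_[p]) (Λ : Submodule ℤ_[p] 𝕃) : Prop :=
  Λ.FG ∧ Submodule.span ℚ_[p] (Λ : Set 𝕃) = ⊤ ∧
    (∀ x : 𝕃, (∀ y ∈ Λ, ‖B x y‖ ≤ 1) → x ∈ Λ) ∧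
    (∀ x ∈ Λ, ∀ y ∈ Λ, ‖B ((p : ℚ_[p]) • x) y‖ ≤ 1)


open LinearMap (BilinForm)
open Submodule

section VertexLatticeAux

universe u
variable {p : ℕ} [Fact (Nat.Prime p)] {𝕃 : Type u} [AddCommGroup 𝕃]
    [Module ℚ_[p] 𝕃] [Module ℤ_[p] 𝕃] [IsScalarTower ℤ_[p] ℚ_[p] 𝕃]

lemma pd_noZeroSMul : NoZeroSMulDivisors ℤ_[p] 𝕃 := by
  constructor
  intro a x h
  rcases eq_or_ne a 0 with rfl | ha
  · exact Or.inl rfl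
  · refine Or.inr ?_
    have h' : (algebraMap ℤ_[p] ℚ_[p] a) • x = 0 := by
      rwa [IsScalarTower.algebraMap_smul ℚ_[p] a x]
    have hne : (algebraMap ℤ_[p] ℚ_[p] a) ≠ 0 :=
      PadicInt.coe_ne_zero.mpr ha
    exact (smul_eq_zero.mp h').resolve_left hne

lemma lattice_basis (N : Submodule ℤ_[p] 𝕃) (hfg : N.FG)
    (hfull : span ℚ_[p] (N : Set 𝕃) = ⊤) :
    ∃ (ι : Type u) (_ : Fintype ι) (b : Module.Basis ι ℚ_[p] 𝕃),
      N = span ℤ_[p] (Set.range b) := by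
  haveI : NoZeroSMulDivisors ℤ_[p] 𝕃 := pd_noZeroSMul
  haveI : Module.Finite ℤ_[p] N := Module.Finite.iff_fg.mpr hfg
  haveI : Module.Free ℤ_[p] N := Module.free_of_finite_type_torsion_free'
  set ι := Module.Free.ChooseBasisIndex ℤ_[p] N
  haveI : Fintype ι := inferInstance
  set c : Module.Basis ι ℤ_[p] N := Module.Free.chooseBasis ℤ_[p] N
  set b : ι → 𝕃 := fun i => (c i : 𝕃) with hb
  have hliZ : LinearIndependent ℤ_[p] b :=
    c.linearIndependent.map' N.subtype N.ker_subtype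
  have hli : LinearIndependent ℚ_[p] b :=
    (LinearIndependent.iff_fractionRing ℤ_[p] ℚ_[p]).mp hliZ
  have hNspan : N = span ℤ_[p] (Set.range b) := by
    have h1 : span ℤ_[p] (Set.range c) = ⊤ := c.span_eq
    have h2 : Submodule.map N.subtype (span ℤ_[p] (Set.range c)) = N := by
      rw [h1, Submodule.map_subtype_top]
    rw [Submodule.map_span, ← Set.range_comp] at h2
    exact h2.symm
  have hsp : span ℚ_[p] (Set.range b) = ⊤ := by
    rw [← hfull, hNspan]
    exact (Submodule.span_span_of_tower ℤ_[p] ℚ_[p] _).symm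
  refine ⟨ι, inferInstance, Module.Basis.mk hli hsp.ge, ?_⟩
  rw [Module.Basis.coe_mk]
  exact hNspan

lemma mem_one_iff {z : ℚ_[p]} : z ∈ (1 : Submodule ℤ_[p] ℚ_[p]) ↔ ‖z‖ ≤ 1 := by
  rw [Submodule.mem_one]
  constructor
  · rintro ⟨y, rfl⟩; exact y.2
  · intro h; exact ⟨⟨z, h⟩, rfl⟩

variable (Bl : BilinForm ℚ_[p] 𝕃)

variable (Bl : BilinForm ℚ_[p] 𝕃)

lemma mem_dual_iff {N : Submodule ℤ_[p] 𝕃} {x : 𝕃} :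
    x ∈ Bl.dualSubmodule N ↔ ∀ y ∈ N, ‖Bl x y‖ ≤ 1 := by
  simp only [LinearMap.BilinForm.mem_dualSubmodule, mem_one_iff]

lemma dual_antitone {N₁ N₂ : Submodule ℤ_[p] 𝕃} (h : N₁ ≤ N₂) :
    Bl.dualSubmodule N₂ ≤ Bl.dualSubmodule N₁ :=
  fun _ hx y hy => hx y (h hy)

lemma dual_sup {N₁ N₂ : Submodule ℤ_[p] 𝕃} :
    Bl.dualSubmodule (N₁ ⊔ N₂) = Bl.dualSubmodule N₁ ⊓ Bl.dualSubmodule N₂ := by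
  apply le_antisymm
  · exact le_inf (dual_antitone Bl le_sup_left) (dual_antitone Bl le_sup_right)
  · rintro x ⟨h1, h2⟩ y hy
    obtain ⟨a, ha, b, hb, rfl⟩ := Submodule.mem_sup.mp hy
    rw [map_add]
    exact add_mem (h1 a ha) (h2 b hb)

-- double dual
lemma dual_dual (hnd : Bl.Nondegenerate) (hsym : Bl.IsSymm)
    (N : Submodule ℤ_[p] 𝕃) (hfg : N.FG) (hfull : span ℚ_[p] (N : Set 𝕃) = ⊤) :
    Bl.dualSubmodule (Bl.dualSubmodule N) = N := by
  obtain ⟨ι, _, b, rfl⟩ := lattice_basis N hfg hfull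
  exact Bl.dualSubmodule_dualSubmodule_of_basis hnd hsym b

/-- vertex lattice, reformulated via `dualSubmodule`. -/
def VL (Bl : BilinForm ℚ_[p] 𝕃) (Λ : Submodule ℤ_[p] 𝕃) : Prop :=
  Λ.FG ∧ span ℚ_[p] (Λ : Set 𝕃) = ⊤ ∧ Bl.dualSubmodule Λ ≤ Λ ∧
    ∀ x ∈ Λ, (p : ℤ_[p]) • x ∈ Bl.dualSubmodule Λ

lemma bl_smul_left (c : ℤ_[p]) (x y : 𝕃) : Bl (c • x) y = (c : ℚ_[p]) * Bl x y := by
  rw [← IsScalarTower.algebraMap_smul ℚ_[p] c x]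
  simp [Algebra.smul_def]

lemma bl_smul_right (c : ℤ_[p]) (x y : 𝕃) : Bl x (c • y) = (c : ℚ_[p]) * Bl x y := by
  rw [← IsScalarTower.algebraMap_smul ℚ_[p] c y]
  simp [Algebra.smul_def]

lemma norm_int_mul_le (c : ℤ_[p]) {t : ℚ_[p]} (h : ‖t‖ ≤ 1) : ‖(c : ℚ_[p]) * t‖ ≤ 1 := by
  rw [norm_mul]
  calc ‖(c : ℚ_[p])‖ * ‖t‖ ≤ 1 * 1 := by
        apply mul_le_mul _ h (norm_nonneg t) zero_le_one
        simpa using c.norm_le_one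
    _ = 1 := by ring

lemma norm_add_le_one {a b : ℚ_[p]} (ha : ‖a‖ ≤ 1) (hb : ‖b‖ ≤ 1) : ‖a + b‖ ≤ 1 :=
  le_trans (Padic.nonarchimedean a b) (max_le ha hb)

lemma fg_of_le {N Λ : Submodule ℤ_[p] 𝕃} (h : N ≤ Λ) (hfg : Λ.FG) : N.FG := by
  haveI : Module.Finite ℤ_[p] Λ := Module.Finite.iff_fg.mpr hfg
  haveI : IsNoetherian ℤ_[p] Λ := isNoetherian_of_isNoetherianRing_of_finite ℤ_[p] Λ
  have h1 : (Submodule.comap Λ.subtype N).FG := IsNoetherian.noetherian _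
  have h2 : Submodule.map Λ.subtype (Submodule.comap Λ.subtype N) = N := by
    rw [Submodule.map_comap_subtype]
    exact inf_eq_right.mpr h
  exact h2 ▸ h1.map _

lemma full_of_p_le {Λ D : Submodule ℤ_[p] 𝕃} (hfull : span ℚ_[p] (Λ : Set 𝕃) = ⊤)
    (h : ∀ x ∈ Λ, (p : ℤ_[p]) • x ∈ D) : span ℚ_[p] (D : Set 𝕃) = ⊤ := by
  have hp : ((p : ℕ) : ℚ_[p]) ≠ 0 := by
    exact_mod_cast (Fact.out : Nat.Prime p).ne_zero
  rw [eq_top_iff, ← hfull, Submodule.span_le]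
  intro x hx
  have h1 : (p : ℤ_[p]) • x ∈ span ℚ_[p] (D : Set 𝕃) :=
    Submodule.subset_span (h x hx)
  have h2 : ((p : ℚ_[p])⁻¹) • ((p : ℤ_[p]) • x) = x := by
    rw [← IsScalarTower.algebraMap_smul ℚ_[p] ((p : ℕ) : ℤ_[p]) x, ← smul_assoc]
    simp [hp]
  simpa [h2] using Submodule.smul_mem _ ((p : ℚ_[p])⁻¹) h1

section Moves
variable {Bl} (hnd : Bl.Nondegenerate) (hsym : ∀ x y : 𝕃, Bl x y = Bl y x)

include hsym in
lemma dual_in_dual {Λ : Submodule ℤ_[p] 𝕃} {w x : 𝕃} (hw : w ∈ Λ)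
    (hx : x ∈ Bl.dualSubmodule Λ) : ‖Bl w x‖ ≤ 1 := by
  rw [hsym w x]
  exact (mem_dual_iff Bl).mp hx w hw

include hnd hsym in
lemma dual_inf {Λ Λ' : Submodule ℤ_[p] 𝕃} (hΛ : VL Bl Λ) (hΛ' : VL Bl Λ') :
    Bl.dualSubmodule (Λ ⊓ Λ') = Bl.dualSubmodule Λ ⊔ Bl.dualSubmodule Λ' := by
  obtain ⟨hfg, hfull, hdual, hint⟩ := hΛ
  obtain ⟨hfg', hfull', hdual', hint'⟩ := hΛ'
  have hsym' : Bl.IsSymm := ⟨fun x y => hsym x y⟩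
  set S := Bl.dualSubmodule Λ ⊔ Bl.dualSubmodule Λ' with hS
  have hSfg : S.FG := (fg_of_le hdual hfg).sup (fg_of_le hdual' hfg')
  have hSfull : span ℚ_[p] (S : Set 𝕃) = ⊤ := by
    refine full_of_p_le hfull fun x hx => ?_
    exact Submodule.mem_sup_left (hint x hx)
  have hdS : Bl.dualSubmodule S = Λ ⊓ Λ' := by
    rw [hS, dual_sup, dual_dual Bl hnd hsym' Λ hfg hfull,
      dual_dual Bl hnd hsym' Λ' hfg' hfull']
  rw [← hdS, dual_dual Bl hnd hsym' S hSfg hSfull]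

include hnd hsym in
lemma shrink {Λ Λ' : Submodule ℤ_[p] 𝕃} (hΛ : VL Bl Λ) (hΛ' : VL Bl Λ') :
    VL Bl (Bl.dualSubmodule Λ ⊔ (Λ ⊓ Λ')) ∧ Bl.dualSubmodule Λ ⊔ (Λ ⊓ Λ') ≤ Λ := by
  obtain ⟨hfg, hfull, hdual, hint⟩ := hΛ
  obtain ⟨hfg', hfull', hdual', hint'⟩ := hΛ'
  set L := Bl.dualSubmodule Λ ⊔ (Λ ⊓ Λ') with hLdef
  have hLΛ : L ≤ Λ := sup_le hdual inf_le_left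
  have hLfg : L.FG := fg_of_le hLΛ hfg
  have hLfull : span ℚ_[p] (L : Set 𝕃) = ⊤ := by
    refine full_of_p_le hfull fun x hx => ?_
    exact Submodule.mem_sup_left (hint x hx)
  -- the four-term integrality bound
  have hLint : ∀ x ∈ L, ∀ y ∈ L, ‖Bl ((p : ℤ_[p]) • x) y‖ ≤ 1 := by
    intro x hx y hy
    obtain ⟨a, ha, k, hk, rfl⟩ := Submodule.mem_sup.mp hx
    obtain ⟨a', ha', k', hk', rfl⟩ := Submodule.mem_sup.mp hy
    simp only [smul_add, map_add, LinearMap.add_apply]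
    refine norm_add_le_one (norm_add_le_one ?_ ?_) (norm_add_le_one ?_ ?_)
    · -- B (p a) a'
      rw [bl_smul_left]
      exact norm_int_mul_le _ (dual_in_dual hsym (hdual ha) ha')
    · -- B (p k) a'
      rw [bl_smul_left]
      exact norm_int_mul_le _ (dual_in_dual hsym hk.1 ha')
    · -- B (p a) k'
      rw [bl_smul_left]
      exact norm_int_mul_le _ ((mem_dual_iff Bl).mp ha k' hk'.1)
    · -- B (p k) k'
      exact (mem_dual_iff Bl).mp (hint k hk.1) k' hk'.1
  refine ⟨⟨hLfg, hLfull, ?_, fun x hx => (mem_dual_iff Bl).mpr fun y hy =>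
    hLint x hx y hy⟩, hLΛ⟩
  -- dual L ≤ L
  intro u hu
  rw [hLdef, dual_sup] at hu
  obtain ⟨hu1, hu2⟩ := hu
  have hsym' : Bl.IsSymm := ⟨fun x y => hsym x y⟩
  rw [dual_dual Bl hnd hsym' Λ hfg hfull] at hu1
  rw [dual_inf hnd hsym ⟨hfg, hfull, hdual, hint⟩ ⟨hfg', hfull', hdual', hint'⟩] at hu2
  obtain ⟨a, ha, b, hb, rfl⟩ := Submodule.mem_sup.mp hu2
  have hbΛ : b ∈ Λ := by
    have : b = a + b - a := by abel
    rw [this]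
    exact Submodule.sub_mem _ hu1 (hdual ha)
  exact Submodule.add_mem _ (Submodule.mem_sup_left ha)
    (Submodule.mem_sup_right ⟨hbΛ, hdual' hb⟩)

end Moves

section Moves2
variable {Bl : BilinForm ℚ_[p] 𝕃} (hnd : Bl.Nondegenerate) (hsym : ∀ x y : 𝕃, Bl x y = Bl y x)

include hnd hsym in
/-- Grow move: `M = L ⊔ ℤₚ·x` is a vertex lattice, where `L` is the shrink of `Λ`,
`x ∈ Λ'`, `p·x ∈ Λ`. -/
lemma grow {Λ Λ' : Submodule ℤ_[p] 𝕃} (hΛ : VL Bl Λ) (hΛ' : VL Bl Λ') {x : 𝕃}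
    (hxΛ' : x ∈ Λ') (hpx : (p : ℤ_[p]) • x ∈ Λ) :
    VL Bl ((Bl.dualSubmodule Λ ⊔ (Λ ⊓ Λ')) ⊔ span ℤ_[p] {x}) := by
  obtain ⟨hL, hLΛ⟩ := shrink hnd hsym hΛ hΛ'
  obtain ⟨hLfg, hLfull, hLdual, hLint⟩ := hL
  set L := Bl.dualSubmodule Λ ⊔ (Λ ⊓ Λ') with hLdef
  set M := L ⊔ span ℤ_[p] {x} with hMdef
  have hLM : L ≤ M := le_sup_left
  -- key pointwise integrality : ‖Bl (p • x) l‖ ≤ 1 for l ∈ L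
  have hxL : ∀ l ∈ L, ‖Bl ((p : ℤ_[p]) • x) l‖ ≤ 1 := by
    intro l hl
    obtain ⟨a, ha, k, hk, rfl⟩ := Submodule.mem_sup.mp hl
    rw [map_add]
    refine norm_add_le_one ?_ ?_
    · exact dual_in_dual hsym hpx ha
    · exact (mem_dual_iff Bl).mp (hΛ'.2.2.2 x hxΛ') k hk.2
  have hxx : ‖Bl ((p : ℤ_[p]) • x) x‖ ≤ 1 :=
    (mem_dual_iff Bl).mp (hΛ'.2.2.2 x hxΛ') x hxΛ'
  have hMint : ∀ u ∈ M, ∀ v ∈ M, ‖Bl ((p : ℤ_[p]) • u) v‖ ≤ 1 := by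
    intro u hu v hv
    obtain ⟨l, hlL, w, hw, rfl⟩ := Submodule.mem_sup.mp hu
    obtain ⟨a, rfl⟩ := Submodule.mem_span_singleton.mp hw
    obtain ⟨l', hl'L, w', hw', rfl⟩ := Submodule.mem_sup.mp hv
    obtain ⟨b, rfl⟩ := Submodule.mem_span_singleton.mp hw'
    simp only [smul_add, map_add, LinearMap.add_apply]
    refine norm_add_le_one (norm_add_le_one ?_ ?_) (norm_add_le_one ?_ ?_)
    · exact (mem_dual_iff Bl).mp (hLint l hlL) l' hl'L
    · -- B (p (a x)) l'
      rw [smul_comm, bl_smul_left]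
      exact norm_int_mul_le _ (hxL l' hl'L)
    · -- B (p l) (b x)
      rw [bl_smul_right]
      refine norm_int_mul_le _ ?_
      have swap : Bl ((p : ℤ_[p]) • l) x = Bl ((p : ℤ_[p]) • x) l := by
        rw [bl_smul_left, bl_smul_left, hsym]
      rw [swap]
      exact hxL l hlL
    · -- B (p (a x)) (b x)
      rw [smul_comm, bl_smul_left, bl_smul_right]
      exact norm_int_mul_le _ (norm_int_mul_le _ hxx)
  refine ⟨hLfg.sup (Submodule.fg_span_singleton x), ?_, ?_, fun u hu =>
    (mem_dual_iff Bl).mpr fun v hv => hMint u hu v hv⟩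
  · rw [eq_top_iff, ← hLfull]
    exact Submodule.span_mono (by exact_mod_cast hLM)
  · exact le_trans (le_trans (dual_antitone Bl hLM) hLdual) hLM

end Moves2

lemma exists_pow_smul_mem (Λ : Submodule ℤ_[p] 𝕃)
    (hfull : span ℚ_[p] (Λ : Set 𝕃) = ⊤) (z : 𝕃) :
    ∃ k : ℕ, ((p : ℤ_[p]) ^ k) • z ∈ Λ := by
  have hz : z ∈ span ℚ_[p] (Λ : Set 𝕃) := hfull ▸ Submodule.mem_top
  induction hz using Submodule.span_induction with
  | mem w hw => exact ⟨0, by simpa using hw⟩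
  | zero => exact ⟨0, by simp⟩
  | add u v _ _ hu hv =>
    obtain ⟨k1, h1⟩ := hu
    obtain ⟨k2, h2⟩ := hv
    refine ⟨k1 + k2, ?_⟩
    rw [smul_add, pow_add]
    refine Submodule.add_mem _ ?_ ?_
    · rw [mul_comm, ← smul_smul]; exact Submodule.smul_mem _ _ h1
    · rw [← smul_smul]; exact Submodule.smul_mem _ _ h2
  | smul a u _ hu =>
    obtain ⟨k, hk⟩ := hu
    have hplt : (1 : ℝ) < (p : ℝ) := by
      exact_mod_cast (Fact.out : Nat.Prime p).one_lt
    obtain ⟨m, hm⟩ := pow_unbounded_of_one_lt ‖a‖ hplt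
    have hnorm : ‖(p : ℚ_[p]) ^ m * a‖ ≤ 1 := by
      rw [norm_mul, norm_pow, Padic.norm_p]
      rw [inv_pow]
      rw [inv_mul_le_iff₀ (by positivity), mul_one]
      exact hm.le
    refine ⟨m + k, ?_⟩
    set b : ℤ_[p] := ⟨(p : ℚ_[p]) ^ m * a, hnorm⟩ with hb
    have key : ((p : ℤ_[p]) ^ (m + k)) • (a • u) = b • (((p : ℤ_[p]) ^ k) • u) := by
      rw [← IsScalarTower.algebraMap_smul ℚ_[p] ((p : ℤ_[p]) ^ (m + k)) (a • u),
        ← IsScalarTower.algebraMap_smul ℚ_[p] b,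
        ← IsScalarTower.algebraMap_smul ℚ_[p] ((p : ℤ_[p]) ^ k) u,
        smul_smul, smul_smul]
      congr 1
      simp only [hb, PadicInt.algebraMap_apply, PadicInt.mk_coe]
      push_cast
      change _ = ((p : ℚ_[p]) ^ m * a) * _
      ring
    rw [key]
    exact Submodule.smul_mem _ _ hk

section Chain
variable {α : Type*} [Preorder α] (P : α → Prop)

lemma chain_prepend {n : ℕ} {c : Fin (n + 1) → α} (A : α) (hA : P A)
    (hP : ∀ i, P (c i)) (hedge : ∀ i : Fin n, c i.castSucc ≤ c i.succ ∨ c i.succ ≤ c i.castSucc)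
    (h0 : A ≤ c 0 ∨ c 0 ≤ A) :
    ∃ c' : Fin (n + 2) → α, c' 0 = A ∧ c' (Fin.last (n + 1)) = c (Fin.last n) ∧
      (∀ i, P (c' i)) ∧
      (∀ i : Fin (n + 1), c' i.castSucc ≤ c' i.succ ∨ c' i.succ ≤ c' i.castSucc) := by
  refine ⟨Fin.cons A c, ?_, ?_, ?_, ?_⟩
  · simp
  · have : Fin.last (n + 1) = (Fin.last n).succ := rfl
    rw [this, Fin.cons_succ]
  · intro i
    induction i using Fin.cases with
    | zero => simpa using hA
    | succ j => simpa using hP j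
  · intro i
    induction i using Fin.cases with
    | zero =>
      simp only [Fin.castSucc_zero, Fin.cons_zero, Fin.succ_zero_eq_one]
      have : (1 : Fin (n + 2)) = (0 : Fin (n + 1)).succ := rfl
      rw [this, Fin.cons_succ]
      exact h0
    | succ j =>
      have h1 : (j.succ).castSucc = (j.castSucc).succ := rfl
      rw [h1, Fin.cons_succ, Fin.cons_succ]
      exact hedge j

end Chain

section Main
variable {Bl : BilinForm ℚ_[p] 𝕃} (hnd : Bl.Nondegenerate) (hsym : ∀ x y : 𝕃, Bl x y = Bl y x)

include hnd hsym in
lemma main_chain {Λ' : Submodule ℤ_[p] 𝕃} (hΛ' : VL Bl Λ') (Λ : Submodule ℤ_[p] 𝕃)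
    (hΛ : VL Bl Λ) :
    ∃ (n : ℕ) (c : Fin (n + 1) → Submodule ℤ_[p] 𝕃),
      c 0 = Λ ∧ c (Fin.last n) = Λ' ∧ (∀ i, VL Bl (c i)) ∧
      (∀ i : Fin n, c i.castSucc ≤ c i.succ ∨ c i.succ ≤ c i.castSucc) := by
  classical
  haveI : Module.Finite ℤ_[p] Λ' := Module.Finite.iff_fg.mpr hΛ'.1
  haveI : IsNoetherian ℤ_[p] Λ' := isNoetherian_of_isNoetherianRing_of_finite ℤ_[p] Λ'
  have wf : WellFounded ((· > ·) : Submodule ℤ_[p] Λ' → Submodule ℤ_[p] Λ' → Prop) :=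
    isNoetherian_iff.mp inferInstance
  refine wf.induction
    (C := fun N => ∀ Λ : Submodule ℤ_[p] 𝕃, VL Bl Λ →
      Submodule.comap Λ'.subtype (Λ ⊓ Λ') = N →
      ∃ (n : ℕ) (c : Fin (n + 1) → Submodule ℤ_[p] 𝕃),
        c 0 = Λ ∧ c (Fin.last n) = Λ' ∧ (∀ i, VL Bl (c i)) ∧
        (∀ i : Fin n, c i.castSucc ≤ c i.succ ∨ c i.succ ≤ c i.castSucc))
    (Submodule.comap Λ'.subtype (Λ ⊓ Λ')) ?_ Λ hΛ rfl
  clear hΛ Λ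
  rintro N IH Λ hΛ rfl
  by_cases hle : Λ' ≤ Λ
  · -- direct chain Λ ⊇ Λ'
    refine ⟨1, ![Λ, Λ'], rfl, rfl, ?_, ?_⟩
    · intro i
      fin_cases i
      · exact hΛ
      · exact hΛ'
    · intro i
      fin_cases i
      exact Or.inr hle
  · obtain ⟨z, hzΛ', hzΛ⟩ := SetLike.not_le_iff_exists.mp hle
    have hex : ∃ k : ℕ, ((p : ℤ_[p]) ^ k) • z ∈ Λ := exists_pow_smul_mem Λ hΛ.2.1 z
    set k0 := Nat.find hex with hk0def
    have hk0 : ((p : ℤ_[p]) ^ k0) • z ∈ Λ := Nat.find_spec hex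
    have hk0pos : k0 ≠ 0 := by
      intro h
      rw [h, pow_zero, one_smul] at hk0
      exact hzΛ hk0
    set x := ((p : ℤ_[p]) ^ (k0 - 1)) • z with hxdef
    have hxΛ : x ∉ Λ := Nat.find_min hex (Nat.sub_lt (Nat.pos_of_ne_zero hk0pos) one_pos)
    have hxΛ' : x ∈ Λ' := Submodule.smul_mem _ _ hzΛ'
    have hpx : (p : ℤ_[p]) • x ∈ Λ := by
      rw [hxdef, smul_smul, ← pow_succ',
        Nat.sub_add_cancel (Nat.one_le_iff_ne_zero.mpr hk0pos)]
      exact hk0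
    obtain ⟨hL, hLΛ⟩ := shrink hnd hsym hΛ hΛ'
    have hM : VL Bl ((Bl.dualSubmodule Λ ⊔ (Λ ⊓ Λ')) ⊔ span ℤ_[p] {x}) :=
      grow hnd hsym hΛ hΛ' hxΛ' hpx
    set L := Bl.dualSubmodule Λ ⊔ (Λ ⊓ Λ') with hLdef
    set M := L ⊔ span ℤ_[p] {x} with hMdef
    have hxM : x ∈ M := Submodule.mem_sup_right (Submodule.mem_span_singleton_self x)
    have hsub : Λ ⊓ Λ' ≤ M ⊓ Λ' := by
      intro w hw
      exact ⟨Submodule.mem_sup_left (Submodule.mem_sup_right hw), hw.2⟩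
    have hgt : Submodule.comap Λ'.subtype (M ⊓ Λ') > Submodule.comap Λ'.subtype (Λ ⊓ Λ') := by
      refine lt_of_le_of_ne (Submodule.comap_mono hsub) ?_
      intro heq
      have hmem : (⟨x, hxΛ'⟩ : Λ') ∈ Submodule.comap Λ'.subtype (Λ ⊓ Λ') := by
        rw [heq]
        exact ⟨hxM, hxΛ'⟩
      exact hxΛ hmem.1
    obtain ⟨n, c, hc0, hclast, hcP, hcE⟩ := IH _ hgt M hM rfl
    obtain ⟨c₂, hc₂0, hc₂last, hc₂P, hc₂E⟩ :=
      chain_prepend (VL Bl) L hL hcP hcE (Or.inl (hc0 ▸ le_sup_left))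
    obtain ⟨c₃, hc₃0, hc₃last, hc₃P, hc₃E⟩ :=
      chain_prepend (VL Bl) Λ hΛ hc₂P hc₂E (Or.inr (hc₂0 ▸ hLΛ))
    exact ⟨n + 2, c₃, hc₃0, by rw [hc₃last, hc₂last, hclast], hc₃P, hc₃E⟩

end Main


end VertexLatticeAux

/-- any two vertex lattices in the 6-dimensional quadratic space
`𝕃` over `ℚ_p` are connected by a chain of vertex lattices in which consecutive
members are comparable by inclusion. -/
theorem vertexLattices_chain_connected
    (p : ℕ) [Fact (Nat.Prime p)] (hp : Odd p)
    (𝕃 : Type*) [AddCommGroup 𝕃] [Module ℚ_[p] 𝕃] [Module ℤ_[p] 𝕃]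
    [IsScalarTower ℤ_[p] ℚ_[p] 𝕃]
    (hdim : Module.finrank ℚ_[p] 𝕃 = 6)
    (B : 𝕃 → 𝕃 → ℚ_[p])
    (haddl : ∀ x x' y : 𝕃, B (x + x') y = B x y + B x' y)
    (hsmull : ∀ (a : ℚ_[p]) (x y : 𝕃), B (a • x) y = a * B x y)
    (hsymm : ∀ x y : 𝕃, B x y = B y x)
    (hnd : ∀ x : 𝕃, (∀ y : 𝕃, B x y = 0) → x = 0)
    (Λ Λ' : Submodule ℤ_[p] 𝕃)
    (hΛ : IsVertexLattice p B Λ) (hΛ' : IsVertexLattice p B Λ') :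
    ∃ (n : ℕ) (c : Fin (n + 1) → Submodule ℤ_[p] 𝕃),
      c 0 = Λ ∧ c (Fin.last n) = Λ' ∧
      (∀ i, IsVertexLattice p B (c i)) ∧
      (∀ i : Fin n, c i.castSucc ≤ c i.succ ∨ c i.succ ≤ c i.castSucc) := by
  classical
  set Bl : BilinForm ℚ_[p] 𝕃 := LinearMap.mk₂ ℚ_[p] B haddl
    (fun a x y => by rw [hsmull, smul_eq_mul])
    (fun x y y' => by rw [hsymm, haddl, hsymm y x, hsymm y' x])
    (fun a x y => by rw [hsymm x, hsmull, hsymm y x, smul_eq_mul]) with hBl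
  have hBlApp : ∀ x y : 𝕃, Bl x y = B x y := fun x y => rfl
  have hnd' : Bl.Nondegenerate := ⟨fun x hx => hnd x fun y => hx y, fun y hy => hnd y fun x => by rw [hsymm]; exact hy x⟩
  have hsym' : ∀ x y : 𝕃, Bl x y = Bl y x := fun x y => hsymm x y
  have hps : ∀ x : 𝕃, (p : ℚ_[p]) • x = (p : ℤ_[p]) • x := by
    intro x
    rw [← IsScalarTower.algebraMap_smul ℚ_[p] ((p : ℕ) : ℤ_[p]) x]
    congr 1
  have hVL : ∀ N : Submodule ℤ_[p] 𝕃, IsVertexLattice p B N ↔ VL Bl N := by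
    intro N
    constructor
    · rintro ⟨h1, h2, h3, h4⟩
      refine ⟨h1, h2, fun x hx => h3 x fun y hy => (mem_dual_iff Bl).mp hx y hy, ?_⟩
      intro x hx
      refine (mem_dual_iff Bl).mpr fun y hy => ?_
      rw [hBlApp, ← hps]
      exact h4 x hx y hy
    · rintro ⟨h1, h2, h3, h4⟩
      refine ⟨h1, h2, fun x hx => h3 ((mem_dual_iff Bl).mpr fun y hy => hx y hy), ?_⟩
      intro x hx y hy
      rw [← hBlApp, hps]
      exact (mem_dual_iff Bl).mp (h4 x hx) y hy
  obtain ⟨n, c, hc0, hclast, hcP, hcE⟩ :=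
    main_chain hnd' hsym' ((hVL Λ').mp hΛ') Λ ((hVL Λ).mp hΛ)
  exact ⟨n, c, hc0, hclast, fun i => (hVL (c i)).mpr (hcP i), hcE⟩
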